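/- Let σ be an involution in S_n with associated Motzkin path μ (μ_i = U if i<σ(i), L if i=σ(i), D if i>σ(i)). For each s with μ_s ∈ {U,L}, the number of visible inversions of σ of the form (s,t) equals the height h_s(μ), which equals the number of pairs (u, σ(u)) with u < σ(u) and u ≤ s < σ(u). -/

import Mathlib

open Finset

/-- Steps of a Motzkin path: up, level, down. -/
inductive Step | U | L | D
deriving DecidableEq

instance instFintypeStep : Fintype Step :=
  ⟨{Step.U, Step.L, Step.D}, fun x => by cases x <;> simp⟩

/-- `μ` is a Motzkin path: every prefix has at least as many `U`'s as `D`'s, and the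
total numbers of `U`'s and `D`'s agree. -/
def IsMotzkin {n : ℕ} (μ : Fin n → Step) : Prop :=
  (∀ k : Fin n, (Finset.univ.filter (fun j => j ≤ k ∧ μ j = Step.D)).card
      ≤ (Finset.univ.filter (fun j => j ≤ k ∧ μ j = Step.U)).card)
  ∧ (Finset.univ.filter (fun j => μ j = Step.U)).card
    = (Finset.univ.filter (fun j => μ j = Step.D)).card

/-- The height of the `i`-th step of `μ`: the larger of the two `y`-coordinates of
the step, i.e. `#{j ≤ i : μ j = U} − #{j < i : μ j = D}`. -/
def height {n : ℕ} (μ : Fin n → Step) (i : Fin n) : ℕ :=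
  (Finset.univ.filter (fun j => j ≤ i ∧ μ j = Step.U)).card
    - (Finset.univ.filter (fun j => j < i ∧ μ j = Step.D)).card

/-- Biane's word of an involution: `U` if `i < σ i`, `L` if `i = σ i`, `D` if `i > σ i`. -/
def bpath {n : ℕ} (σ : Equiv.Perm (Fin n)) (i : Fin n) : Step :=
  if i < σ i then Step.U else if σ i = i then Step.L else Step.D

/-- Biane's label of step `i`: `|{j ≥ i : σ j ≤ σ i}|`. -/
def blabel {n : ℕ} (σ : Equiv.Perm (Fin n)) (i : Fin n) : ℕ :=
  (Finset.univ.filter (fun j => i ≤ j ∧ σ j ≤ σ i)).card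

lemma bpath_eq_U {n : ℕ} (σ : Equiv.Perm (Fin n)) (j : Fin n) :
    bpath σ j = Step.U ↔ j < σ j := by
  unfold bpath
  split_ifs with h1 h2
  · simp [h1]
  · simp [h2, lt_irrefl]
  · simp [h1]

lemma bpath_eq_D {n : ℕ} (σ : Equiv.Perm (Fin n)) (j : Fin n) :
    bpath σ j = Step.D ↔ σ j < j := by
  unfold bpath
  split_ifs with h1 h2
  · simp [h1.asymm]
  · simp [h2, lt_irrefl]
  · simp [lt_of_le_of_ne (not_lt.mp h1) h2]

/-- For an involution `σ` and a step `s` with `μ_s ∈ {U, L}` (i.e. `s ≤ σ s`), the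
number of visible inversions of the form `(s, t)` equals the height `h_s(μ)`, which
in turn equals `#{u : u ≤ s < σ u}`. -/
theorem visible_inversions_up_level {n : ℕ} (σ : Equiv.Perm (Fin n))
    (hinv : ∀ i, σ (σ i) = i) (s : Fin n) (hs : s ≤ σ s) :
    (Finset.univ.filter
        (fun t : Fin n => s < t ∧ σ t < σ s ∧ σ t ≤ min s (σ s))).card
      = height (bpath σ) s
    ∧ height (bpath σ) s
      = (Finset.univ.filter (fun u : Fin n => u ≤ s ∧ s < σ u)).card := by

  -- part 2: height = card B
  have h2 : height (bpath σ) s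
      = (Finset.univ.filter (fun u : Fin n => u ≤ s ∧ s < σ u)).card := by
    have e1 : (Finset.univ.filter (fun j : Fin n => j ≤ s ∧ bpath σ j = Step.U))
        = Finset.univ.filter (fun j : Fin n => j ≤ s ∧ j < σ j) := by
      apply Finset.filter_congr
      intro j _
      rw [bpath_eq_U]
    have e2 : (Finset.univ.filter (fun j : Fin n => j < s ∧ bpath σ j = Step.D)).card
        = (Finset.univ.filter (fun u : Fin n => u < σ u ∧ σ u < s)).card := by
      apply Finset.card_bij' (fun j _ => σ j) (fun u _ => σ u)
      · intro j hj
        simp only [Finset.mem_filter, Finset.mem_univ, true_and, bpath_eq_D] at hj ⊢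
        rw [hinv]
        exact ⟨hj.2, hj.1⟩
      · intro u hu
        simp only [Finset.mem_filter, Finset.mem_univ, true_and, bpath_eq_D] at hu ⊢
        rw [hinv]
        exact ⟨hu.2, hu.1⟩
      · intro j _; exact hinv j
      · intro u _; exact hinv u
    have hsubset : Finset.univ.filter (fun u : Fin n => u < σ u ∧ σ u < s)
        ⊆ Finset.univ.filter (fun j : Fin n => j ≤ s ∧ j < σ j) := by
      intro u hu
      simp only [Finset.mem_filter, Finset.mem_univ, true_and] at hu ⊢
      exact ⟨le_of_lt (hu.1.trans hu.2), hu.1⟩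
    have hsdiff : Finset.univ.filter (fun j : Fin n => j ≤ s ∧ j < σ j)
        \ Finset.univ.filter (fun u : Fin n => u < σ u ∧ σ u < s)
        = Finset.univ.filter (fun u : Fin n => u ≤ s ∧ s < σ u) := by
      ext j
      simp only [Finset.mem_sdiff, Finset.mem_filter, Finset.mem_univ, true_and]
      constructor
      · rintro ⟨⟨hj1, hj2⟩, hj3⟩
        refine ⟨hj1, ?_⟩
        have h4 : s ≤ σ j := not_lt.mp (fun h => hj3 ⟨hj2, h⟩)
        rcases lt_or_eq_of_le h4 with h | h
        · exact h
        · exfalso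
          have hsj : σ s = j := by rw [h, hinv]
          have hjs : j = s := le_antisymm hj1 (hsj ▸ hs)
          subst hjs
          exact absurd hj2 (by rw [← h]; exact lt_irrefl _)
      · rintro ⟨hj1, hj2⟩
        exact ⟨⟨hj1, lt_of_le_of_lt hj1 hj2⟩, fun h => absurd hj2 (not_lt.mpr h.2.le)⟩
    rw [height, e1, e2, ← hsdiff, Finset.card_sdiff_of_subset hsubset]
  refine ⟨?_, h2⟩
  rw [h2]
  apply Finset.card_bij' (fun t _ => σ t) (fun u _ => σ u)
  · intro t ht
    simp only [Finset.mem_filter, Finset.mem_univ, true_and] at ht ⊢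
    refine ⟨le_trans ht.2.2 (min_le_left _ _), ?_⟩
    rw [hinv]; exact ht.1
  · intro u hu
    simp only [Finset.mem_filter, Finset.mem_univ, true_and] at hu ⊢
    have hune : u ≠ σ s := by
      intro h
      have : σ u = s := by rw [h, hinv]
      exact absurd (this ▸ hu.2) (lt_irrefl s)
    refine ⟨hu.2, ?_, ?_⟩
    · rw [hinv]
      exact lt_of_le_of_ne (hu.1.trans hs) hune
    · rw [hinv]
      exact le_min hu.1 (hu.1.trans hs)
  · intro t _; exact hinv t
  · intro u _; exact hinv u
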